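/- Let G = (V, E) be a 2-regular graph with vertex partition V = V_1 ∪ … ∪ V_h where h ≥ 2 is even and |V_i| = 3 for every i ∈ {1,…,h} (so |E| = |V| = 3h and |V| is even). Construct the approval election: for every color i ∈ {1,…,h} there are |E|/2 color-i-voters and, for every vertex u ∈ V_i, a vertex-candidate c_u approved by all color-i-voters; for every edge e = {u, u'} ∈ E there is an edge-candidate c_e and an edge-voter v_e whose ballot consists exactly of c_e, c_u, c_{u'} and two dummy-candidates d_1, d_2 (so d_1 and d_2 are approved by precisely the edge-voters); and there are |E|²/2 − |E|·h − |E| filling-voters, each approving a single distinct filling-candidate. The committee size is k = |E| − h, and the total number of voters is n = h·|E|/2 + |E| + |E|²/2 − h·|E| − |E|, so n/k = |E|/2. Then G has an independent set V' with |V' ∩ V_i| = 1 for every i ∈ {1,…,h} if and only if this election admits a committee of size k that satisfies JR but does not satisfy EJR+ (equivalently, that satisfies JR but violates 2-EJR+). -/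

import Mathlib

open Finset
open scoped Classical

/-- The set of approvers of candidate `c`. -/
noncomputable def approvers {V C : Type*} [Fintype V] (A : V → Finset C) (c : C) :
    Finset V :=
  Finset.univ.filter fun i => c ∈ A i

/-- `W` satisfies `t`-EJR+ in the election with ballots `A` and committee size `k`. -/
def satisfiesTEJRplus {V C : Type*} [Fintype V] [DecidableEq C]
    (A : V → Finset C) (k t : ℕ) (W : Finset C) : Prop :=
  ∀ c : C, c ∉ W → ∀ ℓ : ℕ, 1 ≤ ℓ → ℓ ≤ t →
    ∀ N' : Finset V, N' ⊆ approvers A c →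
      ((ℓ : ℚ) * (Fintype.card V : ℚ)) / (k : ℚ) ≤ (N'.card : ℚ) →
      ∃ i ∈ N', ℓ ≤ (A i ∩ W).card

/-- `W` satisfies JR iff it satisfies `1`-EJR+. -/
def satisfiesJR {V C : Type*} [Fintype V] [DecidableEq C]
    (A : V → Finset C) (k : ℕ) (W : Finset C) : Prop :=
  satisfiesTEJRplus A k 1 W

/-- The number of filling voters (= filling candidates): `|E|²/2 − |E|·h − |E|`. -/
abbrev fillCount {V : Type*} [Fintype V] [DecidableEq V]
    (G : SimpleGraph V) [DecidableRel G.Adj] (h : ℕ) : ℕ :=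
  G.edgeFinset.card ^ 2 / 2 - G.edgeFinset.card * h - G.edgeFinset.card

/-- Voters: for each color `i ∈ Fin h`, `|E|/2` color-`i`-voters; one edge-voter per
edge; and `|E|²/2 − |E|·h − |E|` filling-voters. -/
abbrev Voter10 {V : Type*} [Fintype V] [DecidableEq V]
    (G : SimpleGraph V) [DecidableRel G.Adj] (h : ℕ) : Type _ :=
  (Fin h × Fin (G.edgeFinset.card / 2)) ⊕
    ({e : Sym2 V // e ∈ G.edgeFinset} ⊕ Fin (fillCount G h))

/-- Candidates: one vertex-candidate per vertex, one edge-candidate per edge, two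
dummy-candidates, and one filling-candidate per filling-voter. -/
abbrev Cand10 {V : Type*} [Fintype V] [DecidableEq V]
    (G : SimpleGraph V) [DecidableRel G.Adj] (h : ℕ) : Type _ :=
  V ⊕ ({e : Sym2 V // e ∈ G.edgeFinset} ⊕ (Fin 2 ⊕ Fin (fillCount G h)))

/-- Ballots: a color-`i`-voter approves all vertex-candidates of vertices of color `i`;
the edge-voter of `e = {u,u'}` approves the edge-candidate `c_e`, the two
vertex-candidates `c_u, c_{u'}`, and both dummy-candidates; the `j`-th filling-voter
approves exactly the `j`-th filling-candidate. -/
noncomputable def ballot10 {V : Type*} [Fintype V] [DecidableEq V]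
    (G : SimpleGraph V) [DecidableRel G.Adj] (h : ℕ) (col : V → Fin h) :
    Voter10 G h → Finset (Cand10 G h) := fun v =>
  match v with
  | Sum.inl (i, _) =>
      Finset.univ.filter fun cnd =>
        match cnd with
        | Sum.inl u => col u = i
        | _ => False
  | Sum.inr (Sum.inl e) =>
      Finset.univ.filter fun cnd =>
        match cnd with
        | Sum.inl u => u ∈ e.val
        | Sum.inr (Sum.inl e') => e' = e
        | Sum.inr (Sum.inr (Sum.inl _)) => True
        | Sum.inr (Sum.inr (Sum.inr _)) => False
  | Sum.inr (Sum.inr j) =>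
      Finset.univ.filter fun cnd =>
        match cnd with
        | Sum.inr (Sum.inr (Sum.inr j')) => j' = j
        | _ => False


set_option linter.unusedSectionVars false
set_option maxHeartbeats 1000000

section Aux
variable {V : Type*} [Fintype V] [DecidableEq V] (G : SimpleGraph V) [DecidableRel G.Adj]
  {h : ℕ} (col : V → Fin h)

lemma cardV_eq (hcol : ∀ i : Fin h, (Finset.univ.filter fun u => col u = i).card = 3) :
    Fintype.card V = 3 * h := by
  have := Finset.card_eq_sum_card_fiberwise (s := (univ : Finset V)) (t := (univ : Finset (Fin h)))
    (f := col) (fun x _ => mem_univ _)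
  simp only [hcol] at this
  rw [Finset.card_univ] at this
  rw [this, Finset.sum_const, Finset.card_univ, Fintype.card_fin, smul_eq_mul, mul_comm]

lemma ecard_eq (hreg : ∀ v : V, G.degree v = 2)
    (hcol : ∀ i : Fin h, (Finset.univ.filter fun u => col u = i).card = 3) :
    G.edgeFinset.card = 3 * h := by
  have h1 := G.sum_degrees_eq_twice_card_edges
  simp only [hreg] at h1
  rw [Finset.sum_const, smul_eq_mul, Finset.card_univ, cardV_eq col hcol] at h1
  omega

-- ballot membership characterizations
lemma mem_ballot_color {i : Fin h} {j : Fin (G.edgeFinset.card / 2)} {c : Cand10 G h} :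
    c ∈ ballot10 G h col (Sum.inl (i, j)) ↔ ∃ u, c = Sum.inl u ∧ col u = i := by
  rcases c with u | (e | (d | f)) <;> simp [ballot10]

lemma mem_ballot_edge {e : {e : Sym2 V // e ∈ G.edgeFinset}} {c : Cand10 G h} :
    c ∈ ballot10 G h col (Sum.inr (Sum.inl e)) ↔
      (∃ u, c = Sum.inl u ∧ u ∈ e.val) ∨ c = Sum.inr (Sum.inl e) ∨
        ∃ d, c = Sum.inr (Sum.inr (Sum.inl d)) := by
  rcases c with u | (e' | (d | f)) <;> simp [ballot10]

lemma mem_ballot_fill {j : Fin (fillCount G h)} {c : Cand10 G h} :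
    c ∈ ballot10 G h col (Sum.inr (Sum.inr j)) ↔ c = Sum.inr (Sum.inr (Sum.inr j)) := by
  rcases c with u | (e' | (d | f)) <;> simp [ballot10]

-- approvers characterizations
lemma approvers_edge (e : {e : Sym2 V // e ∈ G.edgeFinset}) :
    approvers (ballot10 G h col) (Sum.inr (Sum.inl e)) = {Sum.inr (Sum.inl e)} := by
  ext v
  rcases v with ⟨i, j⟩ | (e' | j) <;>
    simp only [approvers, mem_filter, mem_univ, true_and, mem_ballot_color, mem_ballot_edge,
      mem_ballot_fill, mem_singleton]
  · constructor
    · rintro ⟨u, hu, -⟩; exact absurd hu (by simp)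
    · rintro ⟨⟩
  · constructor
    · rintro (⟨u, hu, -⟩ | hv | ⟨d, hd⟩)
      · exact absurd hu (by simp)
      · obtain rfl : e = e' := by simpa [Sum.inr.injEq, Sum.inl.injEq] using hv
        rfl
      · exact absurd hd (by simp)
    · rintro hv
      obtain rfl : e' = e := by simpa [Sum.inr.injEq, Sum.inl.injEq] using hv
      exact Or.inr (Or.inl rfl)
  · constructor
    · rintro ⟨⟩
    · rintro hv; exact absurd hv (by simp)

lemma approvers_fill (j : Fin (fillCount G h)) :
    approvers (ballot10 G h col) (Sum.inr (Sum.inr (Sum.inr j))) = {Sum.inr (Sum.inr j)} := by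
  ext v
  rcases v with ⟨i, j'⟩ | (e' | j') <;>
    simp only [approvers, mem_filter, mem_univ, true_and, mem_ballot_color, mem_ballot_edge,
      mem_ballot_fill, mem_singleton]
  · constructor
    · rintro ⟨u, hu, -⟩; exact absurd hu (by simp)
    · rintro ⟨⟩
  · constructor
    · rintro (⟨u, hu, -⟩ | hv | ⟨d, hd⟩)
      · exact absurd hu (by simp)
      · exact absurd hv (by simp)
      · exact absurd hd (by simp)
    · rintro hv; exact absurd hv (by simp)
  · constructor
    · rintro hv
      obtain rfl : j = j' := by simpa using hv
      rfl
    · rintro hv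
      obtain rfl : j' = j := by simpa using hv
      rfl

lemma approvers_dummy (d : Fin 2) :
    approvers (ballot10 G h col) (Sum.inr (Sum.inr (Sum.inl d))) =
      Finset.univ.image (fun e : {e : Sym2 V // e ∈ G.edgeFinset} => Sum.inr (Sum.inl e)) := by
  ext v
  rcases v with ⟨i, j'⟩ | (e' | j') <;>
    simp only [approvers, mem_filter, mem_univ, true_and, mem_ballot_color, mem_ballot_edge,
      mem_ballot_fill, mem_image, mem_univ, true_and]
  · constructor
    · rintro ⟨u, hu, -⟩; exact absurd hu (by simp)
    · rintro ⟨a, ha⟩; exact absurd ha (by simp)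
  · constructor
    · rintro -; exact ⟨e', rfl⟩
    · rintro -; exact Or.inr (Or.inr ⟨d, rfl⟩)
  · constructor
    · rintro hv; exact absurd hv (by simp)
    · rintro ⟨a, ha⟩; exact absurd ha (by simp)

lemma approvers_dummy_card (d : Fin 2) :
    (approvers (ballot10 G h col) (Sum.inr (Sum.inr (Sum.inl d)))).card = G.edgeFinset.card := by
  rw [approvers_dummy, Finset.card_image_of_injective _ (fun a b hab => by
    simpa using hab), Finset.card_univ, Fintype.card_coe]

lemma approvers_vertex_subset (u : V) :
    approvers (ballot10 G h col) (Sum.inl u) ⊆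
      (Finset.univ.image fun j : Fin (G.edgeFinset.card / 2) => Sum.inl (col u, j)) ∪
      ((Finset.univ.filter fun e : {e : Sym2 V // e ∈ G.edgeFinset} => u ∈ e.val).image
        fun e => Sum.inr (Sum.inl e)) := by
  intro v hv
  rcases v with ⟨i, j⟩ | (e | j)
  · simp only [approvers, mem_filter, mem_ballot_color] at hv
    obtain ⟨-, u', hu', hcu'⟩ := hv
    obtain rfl : u = u' := by injection hu'
    simp [mem_union, hcu'.symm]
  · simp only [approvers, mem_filter, mem_ballot_edge] at hv
    obtain ⟨-, hv⟩ := hv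
    rcases hv with ⟨u', hu', hmem⟩ | hv | ⟨d, hd⟩
    · obtain rfl : u = u' := by injection hu'
      simp [mem_union, hmem]
    · exact absurd hv (by simp)
    · exact absurd hd (by simp)
  · simp [approvers, mem_ballot_fill] at hv

lemma card_filter_sub_incidence (u : V) :
    (Finset.univ.filter fun e : {e : Sym2 V // e ∈ G.edgeFinset} => u ∈ e.val).card
      = G.degree u := by
  rw [← G.card_incidenceFinset_eq_degree]
  apply Finset.card_bij (fun e _ => e.val)
  · intro e he
    simp only [mem_filter] at he
    simp [SimpleGraph.incidenceFinset_eq_filter, e.prop, he.2]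
  · intro a ha b hb hab
    exact Subtype.ext hab
  · intro e he
    simp only [SimpleGraph.incidenceFinset_eq_filter, mem_filter] at he
    exact ⟨⟨e, he.1⟩, by simp [he.2], rfl⟩

lemma approvers_vertex_card (u : V) (hreg : ∀ v : V, G.degree v = 2) :
    (approvers (ballot10 G h col) (Sum.inl u)).card ≤ G.edgeFinset.card / 2 + 2 := by
  refine le_trans (Finset.card_le_card (approvers_vertex_subset G col u)) ?_
  refine le_trans (Finset.card_union_le _ _) ?_
  have h1 : (Finset.univ.image fun j : Fin (G.edgeFinset.card / 2) =>
      (Sum.inl (col u, j) : Voter10 G h)).card ≤ G.edgeFinset.card / 2 := by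
    refine le_trans (Finset.card_image_le) ?_
    simp
  have h2 := Finset.card_image_le (s := Finset.univ.filter
      fun e : {e : Sym2 V // e ∈ G.edgeFinset} => u ∈ e.val)
      (f := fun e => (Sum.inr (Sum.inl e) : Voter10 G h))
  rw [card_filter_sub_incidence, hreg u] at h2
  omega

lemma voter_card (hm : G.edgeFinset.card = 3 * h) (hh2 : 2 ≤ h) (hheven : Even h) :
    Fintype.card (Voter10 G h) = 3 * h * h := by
  obtain ⟨a, rfl⟩ := hheven
  have ha : 1 ≤ a := by omega
  have hb : a ≤ a * a := Nat.le_mul_of_pos_left a ha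
  have hsq : G.edgeFinset.card ^ 2 = 36 * (a * a) := by rw [hm]; ring
  have hmul : G.edgeFinset.card * (a + a) = 12 * (a * a) := by rw [hm]; ring
  have hfill : fillCount G (a + a) = 6 * (a * a) - 6 * a := by
    show G.edgeFinset.card ^ 2 / 2 - G.edgeFinset.card * (a + a) - G.edgeFinset.card
      = 6 * (a * a) - 6 * a
    rw [hsq, hmul, hm]
    omega
  have hhalf : G.edgeFinset.card / 2 = 3 * a := by rw [hm]; omega
  have : Fintype.card (Voter10 G (a + a)) =
      (a + a) * (G.edgeFinset.card / 2) + (G.edgeFinset.card + fillCount G (a + a)) := by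
    simp only [Fintype.card_sum, Fintype.card_prod, Fintype.card_coe, Fintype.card_fin]
  rw [this, hfill, hhalf, hm]
  have : (a + a) * (3 * a) = 6 * (a * a) := by ring
  rw [this]
  have : 3 * (a + a) * (a + a) = 12 * (a * a) := by ring
  omega

lemma card_filter_subtype (p : Sym2 V → Prop) [DecidablePred p]
    [D : DecidablePred fun e : {e : Sym2 V // e ∈ G.edgeFinset} => p e.val] :
    (@Finset.filter _ _ D Finset.univ).card = (G.edgeFinset.filter p).card := by
  apply Finset.card_bij (fun e _ => e.val)
  · intro e he
    simp only [mem_filter] at he ⊢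
    exact ⟨e.prop, he.2⟩
  · intro a ha b hb hab
    exact Subtype.ext hab
  · intro e he
    simp only [mem_filter] at he
    exact ⟨⟨e, he.1⟩, by simp [he.2], rfl⟩

lemma sym2_eq {e : Sym2 V} {u w : V} (hu : u ∈ e) (hw : w ∈ e) (huw : u ≠ w) :
    e = s(u, w) := by
  induction e with
  | _ x y =>
    rw [Sym2.mem_iff] at hu hw
    rcases hu with rfl | rfl <;> rcases hw with rfl | rfl
    · exact absurd rfl huw
    · rfl
    · exact Sym2.eq_swap
    · exact absurd rfl huw

lemma card_biUnion_incidence (hreg : ∀ v : V, G.degree v = 2)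
    (I : Finset V) (hind : ∀ u ∈ I, ∀ w ∈ I, ¬ G.Adj u w) :
    (I.biUnion fun u => G.incidenceFinset u).card = 2 * I.card := by
  rw [Finset.card_biUnion]
  · rw [Finset.sum_congr rfl fun u _ => by rw [G.card_incidenceFinset_eq_degree, hreg u]]
    rw [Finset.sum_const, smul_eq_mul, mul_comm]
  · intro u hu w hw huw
    rw [Function.onFun, Finset.disjoint_left]
    intro e heu hew
    rw [SimpleGraph.mem_incidenceFinset] at heu hew
    have he : e = s(u, w) := sym2_eq heu.2 hew.2 huw
    have : G.Adj u w := by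
      have := heu.1
      rwa [he, SimpleGraph.mem_edgeSet] at this
    exact hind u hu w hw this

lemma card_I (I : Finset V) (hI : ∀ i : Fin h, (I.filter fun u => col u = i).card = 1) :
    I.card = h := by
  have := Finset.card_eq_sum_card_fiberwise (s := I) (t := (univ : Finset (Fin h)))
    (f := col) (fun x _ => mem_univ _)
  simp only [hI] at this
  simp [this]

/-- The committee for the forward direction. -/
noncomputable def committee10 (I : Finset V) : Finset (Cand10 G h) :=
  I.image Sum.inl ∪
    (Finset.univ.filter fun e : {e : Sym2 V // e ∈ G.edgeFinset} =>
      ∀ u ∈ I, u ∉ e.val).image (fun e => Sum.inr (Sum.inl e))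

lemma mem_committee_inl {I : Finset V} {u : V} :
    (Sum.inl u : Cand10 G h) ∈ committee10 G I ↔ u ∈ I := by
  simp only [committee10, mem_union, mem_image, mem_filter]
  constructor
  · rintro (⟨w, hw, hwe⟩ | ⟨e, -, he⟩)
    · obtain rfl : w = u := by injection hwe
      exact hw
    · exact absurd he (by simp)
  · intro hu; exact Or.inl ⟨u, hu, rfl⟩

lemma mem_committee_edge {I : Finset V} {e : {e : Sym2 V // e ∈ G.edgeFinset}} :
    (Sum.inr (Sum.inl e) : Cand10 G h) ∈ committee10 G I ↔ ∀ u ∈ I, u ∉ e.val := by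
  simp only [committee10, mem_union, mem_image, mem_filter]
  constructor
  · rintro (⟨w, hw, hwe⟩ | ⟨e', ⟨-, he'⟩, hee⟩)
    · exact absurd hwe (by simp)
    · obtain rfl : e' = e := by simpa using hee
      exact he'
  · intro hP; exact Or.inr ⟨e, ⟨mem_univ _, hP⟩, rfl⟩

lemma not_mem_committee_dummy {I : Finset V} {d : Fin 2} :
    (Sum.inr (Sum.inr (Sum.inl d)) : Cand10 G h) ∉ committee10 G I := by
  simp only [committee10, mem_union, mem_image, mem_filter]
  rintro (⟨w, -, hwe⟩ | ⟨e, -, he⟩)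
  · exact absurd hwe (by simp)
  · exact absurd he (by simp)

lemma not_mem_committee_fill {I : Finset V} {f : Fin (fillCount G h)} :
    (Sum.inr (Sum.inr (Sum.inr f)) : Cand10 G h) ∉ committee10 G I := by
  simp only [committee10, mem_union, mem_image, mem_filter]
  rintro (⟨w, -, hwe⟩ | ⟨e, -, he⟩)
  · exact absurd hwe (by simp)
  · exact absurd he (by simp)

lemma committee_card (hreg : ∀ v : V, G.degree v = 2)
    (hcol : ∀ i : Fin h, (Finset.univ.filter fun u => col u = i).card = 3)
    (I : Finset V) (hind : ∀ u ∈ I, ∀ w ∈ I, ¬ G.Adj u w)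
    (hI : ∀ i : Fin h, (I.filter fun u => col u = i).card = 1) :
    (committee10 G I : Finset (Cand10 G h)).card = G.edgeFinset.card - h := by
  have hIc : I.card = h := card_I col I hI
  have hm : G.edgeFinset.card = 3 * h := ecard_eq G col hreg hcol
  have hd : Disjoint (I.image (Sum.inl : V → Cand10 G h))
      ((Finset.univ.filter fun e : {e : Sym2 V // e ∈ G.edgeFinset} =>
        ∀ u ∈ I, u ∉ e.val).image (fun e => Sum.inr (Sum.inl e))) := by
    rw [Finset.disjoint_left]
    rintro c hc1 hc2
    simp only [mem_image] at hc1 hc2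
    obtain ⟨u, -, rfl⟩ := hc1
    obtain ⟨e, -, he⟩ := hc2
    exact absurd he (by simp)
  rw [committee10, Finset.card_union_of_disjoint hd,
    Finset.card_image_of_injective _ Sum.inl_injective,
    Finset.card_image_of_injective _ (fun a b hab => by simpa using hab),
    card_filter_subtype G (fun e => ∀ u ∈ I, u ∉ e)]
  have hset : G.edgeFinset.filter (fun e => ∀ u ∈ I, u ∉ e) =
      G.edgeFinset \ (I.biUnion fun u => G.incidenceFinset u) := by
    ext e
    have hins : ∀ (u : V) (e : Sym2 V), e ∈ G.incidenceSet u ↔ e ∈ G.edgeSet ∧ u ∈ e :=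
      fun u e => Iff.rfl
    simp only [mem_filter, mem_sdiff, Finset.mem_biUnion, SimpleGraph.mem_incidenceFinset,
      hins]
    constructor
    · rintro ⟨he, hP⟩
      refine ⟨he, ?_⟩
      rintro ⟨u, hu, -, hue⟩
      exact hP u hu hue
    · rintro ⟨he, hP⟩
      refine ⟨he, fun u hu hue => hP ⟨u, hu, ?_, hue⟩⟩
      rwa [← SimpleGraph.mem_edgeFinset]
  rw [hset, Finset.card_sdiff_of_subset]
  · rw [card_biUnion_incidence G hreg I hind, hIc, hm]
    omega
  · intro e he
    rw [Finset.mem_biUnion] at he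
    obtain ⟨u, -, hue⟩ := he
    rw [SimpleGraph.mem_incidenceFinset] at hue
    rw [SimpleGraph.mem_edgeFinset]
    exact hue.1

lemma forward10 (hh2 : 2 ≤ h) (hheven : Even h)
    (hreg : ∀ v : V, G.degree v = 2)
    (hcol : ∀ i : Fin h, (Finset.univ.filter fun u => col u = i).card = 3)
    (I : Finset V) (hind : ∀ u ∈ I, ∀ w ∈ I, ¬ G.Adj u w)
    (hI : ∀ i : Fin h, (I.filter fun u => col u = i).card = 1)
    (t : ℕ) (ht : 2 ≤ t) :
    ∃ W : Finset (Cand10 G h), W.card = G.edgeFinset.card - h ∧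
      satisfiesJR (ballot10 G h col) (G.edgeFinset.card - h) W ∧
      ¬ satisfiesTEJRplus (ballot10 G h col) (G.edgeFinset.card - h) t W := by
  have hm : G.edgeFinset.card = 3 * h := ecard_eq G col hreg hcol
  have hn : Fintype.card (Voter10 G h) = 3 * h * h := voter_card G hm hh2 hheven
  have hk2 : G.edgeFinset.card - h = 2 * h := by omega
  have hkpos : (0 : ℚ) < ((G.edgeFinset.card - h : ℕ) : ℚ) := by
    rw [hk2]; positivity
  refine ⟨committee10 G I, committee_card G col hreg hcol I hind hI, ?_, ?_⟩
  · -- JR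
    intro c hc ℓ hl1 hlt N' hsub hcard
    obtain rfl : ℓ = 1 := le_antisymm hlt hl1
    have hN3 : 3 ≤ N'.card := by
      rw [hn] at hcard
      rw [div_le_iff₀ hkpos] at hcard
      have : (1 : ℚ) * ((3 * h * h : ℕ) : ℚ) ≤ (N'.card : ℚ) * ((G.edgeFinset.card - h : ℕ) : ℚ) :=
        hcard
      rw [hk2, one_mul] at this
      push_cast at this
      have hnat : 3 * h * h ≤ N'.card * (2 * h) := by exact_mod_cast this
      have h3h : 3 * h ≤ N'.card * 2 := by
        have := Nat.le_of_mul_le_mul_right (by linarith [hnat] : (3 * h) * h ≤ (N'.card * 2) * h)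
          (by omega : 0 < h)
        exact this
      omega
    obtain ⟨i, hi⟩ := Finset.card_pos.1 (by omega : 0 < N'.card)
    rcases i with ⟨i0, j⟩ | (e | j)
    · refine ⟨_, hi, ?_⟩
      obtain ⟨u, hu⟩ := Finset.card_eq_one.1 (hI i0)
      have huI : u ∈ I ∧ col u = i0 := by
        have : u ∈ I.filter fun u => col u = i0 := by rw [hu]; exact mem_singleton_self u
        simpa using this
      refine Finset.card_pos.2 ⟨Sum.inl u, ?_⟩
      rw [mem_inter, mem_ballot_color]
      exact ⟨⟨u, rfl, huI.2⟩, (mem_committee_inl G).2 huI.1⟩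
    · refine ⟨_, hi, ?_⟩
      by_cases hex : ∃ u ∈ I, u ∈ e.val
      · obtain ⟨u, huI, hue⟩ := hex
        refine Finset.card_pos.2 ⟨Sum.inl u, ?_⟩
        rw [mem_inter, mem_ballot_edge]
        exact ⟨Or.inl ⟨u, rfl, hue⟩, (mem_committee_inl G).2 huI⟩
      · push_neg at hex
        refine Finset.card_pos.2 ⟨Sum.inr (Sum.inl e), ?_⟩
        rw [mem_inter, mem_ballot_edge]
        exact ⟨Or.inr (Or.inl rfl), (mem_committee_edge G).2 hex⟩
    · exfalso
      have hc2 := hsub hi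
      simp only [approvers, mem_filter, mem_ballot_fill, mem_univ, true_and] at hc2
      subst hc2
      have hss : N' ⊆ {Sum.inr (Sum.inr j)} := by
        rw [← approvers_fill G col j]; exact hsub
      have := Finset.card_le_card hss
      simp only [card_singleton] at this
      omega
  · -- not t-EJR+
    intro hEJR
    have hbound : ((2 : ℚ) * (Fintype.card (Voter10 G h) : ℚ)) /
        ((G.edgeFinset.card - h : ℕ) : ℚ) ≤
        ((approvers (ballot10 G h col) (Sum.inr (Sum.inr (Sum.inl 0)))).card : ℚ) := by
      rw [div_le_iff₀ hkpos, approvers_dummy_card, hn, hk2, hm]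
      push_cast
      exact le_of_eq (by ring)
    obtain ⟨i, hiN, hcard2⟩ := hEJR (Sum.inr (Sum.inr (Sum.inl 0)))
      (not_mem_committee_dummy G) 2 (by omega) ht _ (subset_refl _) hbound
    rw [approvers_dummy] at hiN
    simp only [mem_image, mem_univ, true_and] at hiN
    obtain ⟨e, rfl⟩ := hiN
    have hone : (ballot10 G h col (Sum.inr (Sum.inl e)) ∩ committee10 G I).card ≤ 1 := by
      by_cases hex : ∃ u ∈ I, u ∈ e.val
      · obtain ⟨u, huI, hue⟩ := hex
        have hss : ballot10 G h col (Sum.inr (Sum.inl e)) ∩ committee10 G I ⊆ {Sum.inl u} := by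
          intro x hx
          rw [mem_inter] at hx
          obtain ⟨hxb, hxW⟩ := hx
          rw [mem_ballot_edge] at hxb
          rcases hxb with ⟨w, rfl, hwe⟩ | rfl | ⟨d, rfl⟩
          · have hwI := (mem_committee_inl G).1 hxW
            by_cases hw : w = u
            · subst hw; exact mem_singleton_self _
            · exfalso
              have hee : e.val = s(w, u) := sym2_eq hwe hue hw
              have hadj : G.Adj w u := by
                have := e.prop
                rw [SimpleGraph.mem_edgeFinset, hee, SimpleGraph.mem_edgeSet] at this
                exact this
              exact hind w hwI u huI hadj
          · exfalso
            exact (mem_committee_edge G).1 hxW u huI hue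
          · exact absurd hxW (not_mem_committee_dummy G)
        exact le_trans (Finset.card_le_card hss) (by simp)
      · push_neg at hex
        have hss : ballot10 G h col (Sum.inr (Sum.inl e)) ∩ committee10 G I ⊆
            {Sum.inr (Sum.inl e)} := by
          intro x hx
          rw [mem_inter] at hx
          obtain ⟨hxb, hxW⟩ := hx
          rw [mem_ballot_edge] at hxb
          rcases hxb with ⟨w, rfl, hwe⟩ | rfl | ⟨d, rfl⟩
          · exact absurd hwe (hex w ((mem_committee_inl G).1 hxW))
          · exact mem_singleton_self _
          · exact absurd hxW (not_mem_committee_dummy G)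
        exact le_trans (Finset.card_le_card hss) (by simp)
    omega

lemma backward10 (hh2 : 2 ≤ h) (hheven : Even h)
    (hreg : ∀ v : V, G.degree v = 2)
    (hcol : ∀ i : Fin h, (Finset.univ.filter fun u => col u = i).card = 3)
    (t : ℕ) (W : Finset (Cand10 G h))
    (hJR : satisfiesJR (ballot10 G h col) (G.edgeFinset.card - h) W)
    (hNE : ¬ satisfiesTEJRplus (ballot10 G h col) (G.edgeFinset.card - h) t W) :
    ∃ I : Finset V, (∀ u ∈ I, ∀ w ∈ I, ¬ G.Adj u w) ∧
      ∀ i : Fin h, (I.filter fun u => col u = i).card = 1 := by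
  have hm : G.edgeFinset.card = 3 * h := ecard_eq G col hreg hcol
  have hn : Fintype.card (Voter10 G h) = 3 * h * h := voter_card G hm hh2 hheven
  have hk2 : G.edgeFinset.card - h = 2 * h := by omega
  have hkpos : (0 : ℚ) < ((G.edgeFinset.card - h : ℕ) : ℚ) := by
    rw [hk2]; positivity
  obtain ⟨a, ha⟩ := hheven
  have hhalf : G.edgeFinset.card / 2 = 3 * a := by omega
  -- Step 1: every color has a representative in W
  have hrep : ∀ i : Fin h, ∃ u, col u = i ∧ Sum.inl u ∈ W := by
    intro i
    by_contra hno
    push_neg at hno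
    obtain ⟨u0, hu0⟩ := Finset.card_pos.1 (by rw [hcol i]; omega)
    rw [mem_filter] at hu0
    have hcW : (Sum.inl u0 : Cand10 G h) ∉ W := hno u0 hu0.2
    set N0 : Finset (Voter10 G h) :=
      Finset.univ.image (fun j : Fin (G.edgeFinset.card / 2) => Sum.inl (i, j)) with hN0
    have hsub : N0 ⊆ approvers (ballot10 G h col) (Sum.inl u0) := by
      intro v hv
      simp only [hN0, mem_image, mem_univ, true_and] at hv
      obtain ⟨j, rfl⟩ := hv
      simp only [approvers, mem_filter, mem_univ, true_and, mem_ballot_color]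
      exact ⟨u0, rfl, hu0.2⟩
    have hN0card : N0.card = G.edgeFinset.card / 2 := by
      rw [hN0, Finset.card_image_of_injective _ (fun a b hab => by simpa using hab),
        card_univ, Fintype.card_fin]
    have hbound : ((1 : ℚ) * (Fintype.card (Voter10 G h) : ℚ)) /
        ((G.edgeFinset.card - h : ℕ) : ℚ) ≤ (N0.card : ℚ) := by
      rw [div_le_iff₀ hkpos, hn, hk2, hN0card, hhalf, ha]
      push_cast
      exact le_of_eq (by ring)
    obtain ⟨v, hvN, hv1⟩ := hJR _ hcW 1 le_rfl le_rfl N0 hsub hbound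
    simp only [hN0, mem_image, mem_univ, true_and] at hvN
    obtain ⟨j, rfl⟩ := hvN
    obtain ⟨x, hx⟩ := Finset.card_pos.1 (by omega : 0 < (ballot10 G h col (Sum.inl (i, j)) ∩ W).card)
    rw [mem_inter, mem_ballot_color] at hx
    obtain ⟨⟨u, rfl, hcu⟩, hxW⟩ := hx
    exact hno u hcu hxW
  -- the failing witness
  rw [satisfiesTEJRplus] at hNE
  push_neg at hNE
  obtain ⟨c, hcW, ℓ, hl1, hlt, N', hsub, hcard, hfail⟩ := hNE
  have hl2 : 2 ≤ ℓ := by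
    by_contra hlo
    obtain rfl : ℓ = 1 := by omega
    obtain ⟨i, hiN, hi1⟩ := hJR c hcW 1 le_rfl le_rfl N' hsub hcard
    have := hfail i hiN
    omega
  have hineq : ℓ * (3 * h * h) ≤ N'.card * (2 * h) := by
    rw [hn] at hcard
    rw [div_le_iff₀ hkpos] at hcard
    rw [hk2] at hcard
    exact_mod_cast hcard
  have hNbig : 3 * h ≤ N'.card := by
    have h1 : (3 * h) * (2 * h) ≤ N'.card * (2 * h) := by
      calc (3 * h) * (2 * h) = 2 * (3 * h * h) := by ring
        _ ≤ ℓ * (3 * h * h) := Nat.mul_le_mul_right _ hl2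
        _ ≤ N'.card * (2 * h) := hineq
    exact Nat.le_of_mul_le_mul_right h1 (by omega)
  have hsup : N'.card ≤ (approvers (ballot10 G h col) c).card := Finset.card_le_card hsub
  obtain ⟨d, rfl⟩ : ∃ d, c = Sum.inr (Sum.inr (Sum.inl d)) := by
    rcases c with u | (e | (d | f))
    · exfalso
      have := approvers_vertex_card G col u hreg
      omega
    · exfalso
      rw [approvers_edge G col e] at hsup
      simp only [card_singleton] at hsup
      omega
    · exact ⟨d, rfl⟩
    · exfalso
      rw [approvers_fill G col f] at hsup
      simp only [card_singleton] at hsup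
      omega
  have hNall : N' = approvers (ballot10 G h col) (Sum.inr (Sum.inr (Sum.inl d))) := by
    apply Finset.eq_of_subset_of_card_le hsub
    rw [approvers_dummy_card, hm]
    exact hNbig
  have hac := approvers_dummy_card G col d
  have hle : N'.card ≤ 3 * h := by omega
  have hl2' : ℓ = 2 := by
    have h1 : ℓ * (3 * h * h) ≤ 2 * (3 * h * h) := by
      calc ℓ * (3 * h * h) ≤ N'.card * (2 * h) := hineq
        _ ≤ (3 * h) * (2 * h) := Nat.mul_le_mul_right _ hle
        _ = 2 * (3 * h * h) := by ring
    have := Nat.le_of_mul_le_mul_right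
      (by calc ℓ * (3 * h * h) ≤ 2 * (3 * h * h) := h1)
      (Nat.mul_pos (Nat.mul_pos (by omega) (by omega)) (by omega : 0 < h))
    omega
  subst hl2'
  -- independence of chosen vertices
  have hSind : ∀ u w : V, Sum.inl u ∈ W → Sum.inl w ∈ W → ¬ G.Adj u w := by
    intro u w huW hwW hadj
    have he : s(u, w) ∈ G.edgeFinset := by
      rw [SimpleGraph.mem_edgeFinset, SimpleGraph.mem_edgeSet]; exact hadj
    have hev : (Sum.inr (Sum.inl ⟨s(u, w), he⟩) : Voter10 G h) ∈ N' := by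
      rw [hNall, approvers_dummy]
      simp only [mem_image, mem_univ, true_and]
      exact ⟨⟨s(u, w), he⟩, rfl⟩
    have hlt2 := hfail _ hev
    have hss : ({Sum.inl u, Sum.inl w} : Finset (Cand10 G h)) ⊆
        ballot10 G h col (Sum.inr (Sum.inl ⟨s(u, w), he⟩)) ∩ W := by
      rw [Finset.insert_subset_iff, Finset.singleton_subset_iff, mem_inter, mem_inter,
        mem_ballot_edge, mem_ballot_edge]
      refine ⟨⟨Or.inl ⟨u, rfl, ?_⟩, huW⟩, ⟨Or.inl ⟨w, rfl, ?_⟩, hwW⟩⟩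
      · simp [Sym2.mem_iff]
      · simp [Sym2.mem_iff]
    have h2c : 2 ≤ (ballot10 G h col (Sum.inr (Sum.inl ⟨s(u, w), he⟩)) ∩ W).card := by
      have hcard12 : ({Sum.inl u, Sum.inl w} : Finset (Cand10 G h)).card = 2 := by
        rw [Finset.card_insert_of_notMem (by simp [hadj.ne]), card_singleton]
      have := Finset.card_le_card hss
      omega
    omega
  choose f hf1 hf2 using hrep
  refine ⟨Finset.univ.image f, ?_, ?_⟩
  · intro u hu w hw
    simp only [mem_image, mem_univ, true_and] at hu hw
    obtain ⟨i1, rfl⟩ := hu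
    obtain ⟨i2, rfl⟩ := hw
    exact hSind _ _ (hf2 i1) (hf2 i2)
  · intro i
    have : (Finset.univ.image f).filter (fun u => col u = i) = {f i} := by
      ext x
      simp only [mem_filter, mem_image, mem_univ, true_and, mem_singleton]
      constructor
      · rintro ⟨⟨i', rfl⟩, hcol'⟩
        rw [hf1 i'] at hcol'
        rw [hcol']
      · rintro rfl
        exact ⟨⟨i, rfl⟩, hf1 i⟩
    rw [this, card_singleton]

end Aux

/-- Correctness of the reduction from Multicolor Independent Set (on 2-regular graphs
with an even number `h ≥ 2` of colors, each of size 3) to JR-not-EJR+: the graph `G`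
has an independent set with exactly one vertex of each color iff the constructed
election, with committee size `k = |E| − h`, admits a size-`k` committee satisfying JR
but not EJR+ — equivalently, satisfying JR but violating `2`-EJR+. -/
theorem stmt10 {V : Type*} [Fintype V] [DecidableEq V]
    (G : SimpleGraph V) [DecidableRel G.Adj]
    (h : ℕ) (hh2 : 2 ≤ h) (hheven : Even h) (col : V → Fin h)
    (hreg : ∀ v : V, G.degree v = 2)
    (hcol : ∀ i : Fin h, (Finset.univ.filter fun u => col u = i).card = 3) :
    ((∃ I : Finset V, (∀ u ∈ I, ∀ w ∈ I, ¬ G.Adj u w) ∧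
        ∀ i : Fin h, (I.filter fun u => col u = i).card = 1) ↔
      (∃ W : Finset (Cand10 G h), W.card = G.edgeFinset.card - h ∧
        satisfiesJR (ballot10 G h col) (G.edgeFinset.card - h) W ∧
        ¬ satisfiesTEJRplus (ballot10 G h col) (G.edgeFinset.card - h)
            (G.edgeFinset.card - h) W)) ∧
    ((∃ I : Finset V, (∀ u ∈ I, ∀ w ∈ I, ¬ G.Adj u w) ∧
        ∀ i : Fin h, (I.filter fun u => col u = i).card = 1) ↔
      (∃ W : Finset (Cand10 G h), W.card = G.edgeFinset.card - h ∧
        satisfiesJR (ballot10 G h col) (G.edgeFinset.card - h) W ∧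
        ¬ satisfiesTEJRplus (ballot10 G h col) (G.edgeFinset.card - h) 2 W)) := by
  have hm : G.edgeFinset.card = 3 * h := ecard_eq G col hreg hcol
  constructor
  · constructor
    · rintro ⟨I, hind, hI⟩
      exact forward10 G col hh2 hheven hreg hcol I hind hI _ (by omega)
    · rintro ⟨W, -, hJR, hNE⟩
      exact backward10 G col hh2 hheven hreg hcol _ W hJR hNE
  · constructor
    · rintro ⟨I, hind, hI⟩
      exact forward10 G col hh2 hheven hreg hcol I hind hI 2 le_rfl
    · rintro ⟨W, -, hJR, hNE⟩
      exact backward10 G col hh2 hheven hreg hcol _ W hJR hNE
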